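/- arXiv:1911.07504 — 5 statements merged into one kernel-verified Lean document; each statement's English description precedes it below -/
import Mathlib

section
/- Let P ⊆ ℝ² be a finite nonempty set and let u ∈ ℝ² be a unit vector. Put m := min_{p∈P} ⟨p,u⟩, M := max_{p∈P} ⟨p,u⟩, and w* := max_{p∈P} min(M − ⟨p,u⟩, ⟨p,u⟩ − m). Then w* is the least element of the set of all w ≥ 0 for which there exist reals c, d with c + w ≤ d − w such that every p ∈ P satisfies c ≤ ⟨p,u⟩ ≤ c + w or d − w ≤ ⟨p,u⟩ ≤ d. In other words, w* is the minimum width of a double-strip with normal u enclosing P, and it is attained by the double-strip whose outer strip is the minimum-width strip [m, M] enclosing P. -/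
/-- Minimum-width double-strip in a fixed orientation: for a finite nonempty
`P ⊆ ℝ²` and a unit vector `u`, with `m = min_{p∈P} ⟪p,u⟫`, `M = max_{p∈P} ⟪p,u⟫`,
the value `w* = max_{p∈P} min (M - ⟪p,u⟫) (⟪p,u⟫ - m)` is the least width `w ≥ 0`
of a double-strip with normal `u` enclosing `P`. -/
theorem minWidth_double_strip_fixed_orientation
    (P : Finset (EuclideanSpace ℝ (Fin 2))) (hP : P.Nonempty)
    (u : EuclideanSpace ℝ (Fin 2)) (hu : ‖u‖ = 1)
    (m M wstar : ℝ)
    (hm : m = P.inf' hP fun p => (inner ℝ p u : ℝ))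
    (hM : M = P.sup' hP fun p => (inner ℝ p u : ℝ))
    (hw : wstar = P.sup' hP fun p =>
      min (M - (inner ℝ p u : ℝ)) ((inner ℝ p u : ℝ) - m)) :
    IsLeast {w : ℝ | 0 ≤ w ∧ ∃ c d : ℝ, c + w ≤ d - w ∧ ∀ p ∈ P,
        (c ≤ (inner ℝ p u : ℝ) ∧ (inner ℝ p u : ℝ) ≤ c + w) ∨
        (d - w ≤ (inner ℝ p u : ℝ) ∧ (inner ℝ p u : ℝ) ≤ d)}
      wstar := by
  have hmle : ∀ p ∈ P, m ≤ (inner ℝ p u : ℝ) := by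
    intro p hp; rw [hm]; exact Finset.inf'_le _ hp
  have hMge : ∀ p ∈ P, (inner ℝ p u : ℝ) ≤ M := by
    intro p hp; rw [hM]
    exact Finset.le_sup' (fun p => (inner ℝ p u : ℝ)) hp
  have hwle : ∀ p ∈ P,
      min (M - (inner ℝ p u : ℝ)) ((inner ℝ p u : ℝ) - m) ≤ wstar := by
    intro p hp; rw [hw]
    exact Finset.le_sup' (fun q => min (M - (inner ℝ q u : ℝ)) ((inner ℝ q u : ℝ) - m)) hp
  constructor
  · refine ⟨?_, m, M, ?_, ?_⟩
    · obtain ⟨p, hp⟩ := hP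
      have := hwle p hp
      have h1 := hmle p hp
      have h2 := hMge p hp
      have : (0:ℝ) ≤ min (M - (inner ℝ p u : ℝ)) ((inner ℝ p u : ℝ) - m) :=
        le_min (by linarith) (by linarith)
      linarith [hwle p hp]
    · -- m + wstar ≤ M - wstar, i.e. 2 wstar ≤ M - m
      have : wstar ≤ (M - m) / 2 := by
        rw [hw]
        apply Finset.sup'_le
        intro p hp
        have h1 := hmle p hp
        have h2 := hMge p hp
        rcases le_total (M - (inner ℝ p u : ℝ)) ((inner ℝ p u : ℝ) - m) with h | h
        · calc min (M - (inner ℝ p u : ℝ)) ((inner ℝ p u : ℝ) - m)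
              ≤ M - (inner ℝ p u : ℝ) := min_le_left _ _
            _ ≤ (M - m) / 2 := by linarith
        · calc min (M - (inner ℝ p u : ℝ)) ((inner ℝ p u : ℝ) - m)
              ≤ (inner ℝ p u : ℝ) - m := min_le_right _ _
            _ ≤ (M - m) / 2 := by linarith
      linarith
    · intro p hp
      have := hwle p hp
      rcases le_total (M - (inner ℝ p u : ℝ)) ((inner ℝ p u : ℝ) - m) with h | h
      · right
        have : M - (inner ℝ p u : ℝ) ≤ wstar := by
          rw [← min_eq_left h]; exact hwle p hp
        exact ⟨by linarith, hMge p hp⟩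
      · left
        have : (inner ℝ p u : ℝ) - m ≤ wstar := by
          rw [← min_eq_right h]; exact hwle p hp
        exact ⟨hmle p hp, by linarith⟩
  · rintro w ⟨hw0, c, d, hcd, hcov⟩
    rw [hw]
    apply Finset.sup'_le
    intro p hp
    obtain ⟨q, hq, hqM⟩ := Finset.exists_mem_eq_sup' hP fun p => (inner ℝ p u : ℝ)
    obtain ⟨r, hr, hrm⟩ := Finset.exists_mem_eq_inf' hP fun p => (inner ℝ p u : ℝ)
    have hMq : M = (inner ℝ q u : ℝ) := by rw [hM, hqM]
    have hmr : m = (inner ℝ r u : ℝ) := by rw [hm, hrm]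
    rcases hcov p hp with ⟨h1, h2⟩ | ⟨h1, h2⟩
    · -- p in lower strip; use r attaining m
      refine le_trans (min_le_right _ _) ?_
      rcases hcov r hr with ⟨g1, g2⟩ | ⟨g1, g2⟩
      · linarith
      · have := hmle p hp
        linarith
    · -- p in upper strip; use q attaining M
      refine le_trans (min_le_left _ _) ?_
      rcases hcov q hq with ⟨g1, g2⟩ | ⟨g1, g2⟩
      · have := hMge p hp
        linarith
      · linarith
end

section
/- Let P ⊆ ℝ² be a finite nonempty set, let Q ⊆ P be nonempty, and let u ∈ ℝ² be a unit vector. Put m := min_{p∈P} ⟨p,u⟩, M := max_{p∈P} ⟨p,u⟩, and w*_Q := max_{q∈Q} min(M − ⟨q,u⟩, ⟨q,u⟩ − m). Then w*_Q is the least element of the set of all w ≥ 0 for which there exist reals c, d with c + w ≤ d − w such that c ≤ ⟨p,u⟩ ≤ d for every p ∈ P, and every q ∈ Q satisfies c ≤ ⟨q,u⟩ ≤ c + w or d − w ≤ ⟨q,u⟩ ≤ d. In other words, w*_Q is the minimum width of a P-constrained double-strip with normal u enclosing Q, and it is attained by the double-strip whose outer strip is the minimum-width strip [m, M] enclosing P.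 -/
/-- Minimum-width `P`-constrained double-strip in a fixed orientation: for a
finite nonempty `P ⊆ ℝ²`, a nonempty `Q ⊆ P`, and a unit vector `u`, with
`m = min_{p∈P} ⟪p,u⟫` and `M = max_{p∈P} ⟪p,u⟫`, the value
`w*_Q = max_{q∈Q} min (M - ⟪q,u⟫) (⟪q,u⟫ - m)` is the least width `w ≥ 0` of a
double-strip with normal `u` whose outer strip contains `P` and which
encloses `Q`. -/
theorem minWidth_constrained_double_strip_fixed_orientation
    (P Q : Finset (EuclideanSpace ℝ (Fin 2))) (hP : P.Nonempty) (hQ : Q.Nonempty)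
    (hQP : Q ⊆ P)
    (u : EuclideanSpace ℝ (Fin 2)) (hu : ‖u‖ = 1)
    (m M wQ : ℝ)
    (hm : m = P.inf' hP fun p => (inner ℝ p u : ℝ))
    (hM : M = P.sup' hP fun p => (inner ℝ p u : ℝ))
    (hw : wQ = Q.sup' hQ fun q =>
      min (M - (inner ℝ q u : ℝ)) ((inner ℝ q u : ℝ) - m)) :
    IsLeast {w : ℝ | 0 ≤ w ∧ ∃ c d : ℝ, c + w ≤ d - w ∧
        (∀ p ∈ P, c ≤ (inner ℝ p u : ℝ) ∧ (inner ℝ p u : ℝ) ≤ d) ∧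
        ∀ q ∈ Q,
          (c ≤ (inner ℝ q u : ℝ) ∧ (inner ℝ q u : ℝ) ≤ c + w) ∨
          (d - w ≤ (inner ℝ q u : ℝ) ∧ (inner ℝ q u : ℝ) ≤ d)}
      wQ := by
  have hmle : ∀ p ∈ P, m ≤ (inner ℝ p u : ℝ) := by
    intro p hp; rw [hm]; exact Finset.inf'_le (fun p => (inner ℝ p u : ℝ)) hp
  have hleM : ∀ p ∈ P, (inner ℝ p u : ℝ) ≤ M := by
    intro p hp; rw [hM]; exact Finset.le_sup' (fun p => (inner ℝ p u : ℝ)) hp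
  constructor
  · obtain ⟨q0, hq0⟩ := hQ
    have hwnn : 0 ≤ wQ := by
      rw [hw]
      exact le_trans
        (le_min (by linarith [hleM q0 (hQP hq0)]) (by linarith [hmle q0 (hQP hq0)]))
        (Finset.le_sup' (fun q => min (M - (inner ℝ q u : ℝ)) ((inner ℝ q u : ℝ) - m)) hq0)
    refine ⟨hwnn, m, M, ?_, fun p hp => ⟨hmle p hp, hleM p hp⟩, ?_⟩
    · have : wQ ≤ (M - m) / 2 := by
        rw [hw]
        refine Finset.sup'_le _ _ fun q hq => ?_
        have h1 := min_le_left (M - (inner ℝ q u : ℝ)) ((inner ℝ q u : ℝ) - m)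
        have h2 := min_le_right (M - (inner ℝ q u : ℝ)) ((inner ℝ q u : ℝ) - m)
        linarith
      linarith
    · intro q hq
      have hle : min (M - (inner ℝ q u : ℝ)) ((inner ℝ q u : ℝ) - m) ≤ wQ := by
        rw [hw]; exact Finset.le_sup' (fun q => min (M - (inner ℝ q u : ℝ)) ((inner ℝ q u : ℝ) - m)) hq
      rcases min_le_iff.mp hle with h | h
      · right; exact ⟨by linarith, hleM q (hQP hq)⟩
      · left; exact ⟨hmle q (hQP hq), by linarith⟩
  · rintro w ⟨hwnn, c, d, hcd, hPin, hQin⟩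
    rw [hw]
    refine Finset.sup'_le _ _ fun q hq => ?_
    have hc : c ≤ m := by
      rw [hm]; exact Finset.le_inf' _ _ fun p hp => (hPin p hp).1
    have hd : M ≤ d := by
      rw [hM]; exact Finset.sup'_le _ _ fun p hp => (hPin p hp).2
    rcases hQin q hq with ⟨h1, h2⟩ | ⟨h1, h2⟩
    · exact le_trans (min_le_right _ _) (by linarith)
    · exact le_trans (min_le_left _ _) (by linarith)
end

section
/- Let P ⊆ ℝ² be a finite set with at least 2 elements. For a unit vector u ∈ ℝ² put m(u) := min_{p∈P} ⟨p,u⟩, M(u) := max_{p∈P} ⟨p,u⟩, and w(u) := max_{p∈P} min(M(u) − ⟨p,u⟩, ⟨p,u⟩ − m(u)). Suppose u* is a unit vector with w(u*) ≤ w(u) for every unit vector u. Then at least one of the following holds: (a) the set {p ∈ P : ⟨p,u*⟩ = m(u*) or ⟨p,u*⟩ = M(u*)} has at least 3 elements (three points of P lie on the boundary of the minimum-width strip in direction u*); or (b) there exist two distinct points p₁, p₂ ∈ P with min(M(u*) − ⟨pᵢ,u*⟩, ⟨pᵢ,u*⟩ − m(u*)) = w(u*) for i = 1, 2 (two points of P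 lie on the boundary of the inner strip of the optimal double-strip). -/
/-- Structure of an optimal double-strip (Lemma 2 of the paper): if the unit
vector `u*` minimizes the width `w(u) = max_{p∈P} min (M(u) - ⟪p,u⟫) (⟪p,u⟫ - m(u))`
of a double-strip with normal `u` enclosing a finite set `P` with `|P| ≥ 2`, then
either three points of `P` lie on the boundary of the minimum-width strip in
direction `u*`, or two points of `P` attain the width `w(u*)` (lie on the
boundary of the inner ℝ strip). -/
theorem optimal_double_strip_configuration
    (P : Finset (EuclideanSpace ℝ (Fin 2))) (hP : P.Nonempty) (hcard : 2 ≤ P.card)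
    (m M w : EuclideanSpace ℝ (Fin 2) → ℝ)
    (hm : ∀ u, m u = P.inf' hP fun p => (inner ℝ p u : ℝ))
    (hM : ∀ u, M u = P.sup' hP fun p => (inner ℝ p u : ℝ))
    (hw : ∀ u, w u = P.sup' hP fun p =>
      min (M u - (inner ℝ p u : ℝ)) ((inner ℝ p u : ℝ) - m u))
    (ustar : EuclideanSpace ℝ (Fin 2)) (hustar : ‖ustar‖ = 1)
    (hopt : ∀ u : EuclideanSpace ℝ (Fin 2), ‖u‖ = 1 → w ustar ≤ w u) :
    3 ≤ {p : EuclideanSpace ℝ (Fin 2) | p ∈ P ∧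
        ((inner ℝ p ustar : ℝ) = m ustar ∨ (inner ℝ p ustar : ℝ) = M ustar)}.ncard ∨
    ∃ p₁ ∈ P, ∃ p₂ ∈ P, p₁ ≠ p₂ ∧
      min (M ustar - (inner ℝ p₁ ustar : ℝ)) ((inner ℝ p₁ ustar : ℝ) - m ustar) = w ustar ∧
      min (M ustar - (inner ℝ p₂ ustar : ℝ)) ((inner ℝ p₂ ustar : ℝ) - m ustar) = w ustar := by
  classical
  by_contra hcon
  push_neg at hcon
  obtain ⟨h3, h2⟩ := hcon
  -- attainers
  obtain ⟨a, haP, ha⟩ := P.exists_mem_eq_inf' hP (fun p => (inner ℝ p ustar : ℝ))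
  obtain ⟨b, hbP, hb⟩ := P.exists_mem_eq_sup' hP (fun p => (inner ℝ p ustar : ℝ))
  obtain ⟨c, hcP, hc⟩ := P.exists_mem_eq_sup' hP (fun p =>
      min (M ustar - (inner ℝ p ustar : ℝ)) ((inner ℝ p ustar : ℝ) - m ustar))
  have hma : m ustar = (inner ℝ a ustar : ℝ) := by rw [hm]; exact ha
  have hMb : M ustar = (inner ℝ b ustar : ℝ) := by rw [hM]; exact hb
  have hwc : w ustar = min (M ustar - (inner ℝ c ustar : ℝ)) ((inner ℝ c ustar : ℝ) - m ustar) := by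
    rw [hw]; exact hc
  have hmle : ∀ p ∈ P, m ustar ≤ (inner ℝ p ustar : ℝ) := by
    intro p hp; rw [hm]; exact Finset.inf'_le _ hp
  have hMge : ∀ p ∈ P, (inner ℝ p ustar : ℝ) ≤ M ustar := by
    intro p hp; rw [hM]; exact Finset.le_sup' (fun p => (inner ℝ p ustar : ℝ)) hp
  have hwge : ∀ p ∈ P,
      min (M ustar - (inner ℝ p ustar : ℝ)) ((inner ℝ p ustar : ℝ) - m ustar) ≤ w ustar := by
    intro p hp; rw [hw]
    exact Finset.le_sup' (fun p => min (M ustar - (inner ℝ p ustar : ℝ))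
      ((inner ℝ p ustar : ℝ) - m ustar)) hp
  have hmM : m ustar ≤ M ustar := le_trans (hmle a haP) (hMge a haP)
  -- uniqueness of width attainer
  have hcuniq : ∀ p ∈ P, p ≠ c →
      min (M ustar - (inner ℝ p ustar : ℝ)) ((inner ℝ p ustar : ℝ) - m ustar) < w ustar := by
    intro p hp hpc
    refine lt_of_le_of_ne (hwge p hp) fun hEq => ?_
    exact h2 p hp c hcP hpc hEq hwc.symm
  -- m < M
  have hmltM : m ustar < M ustar := by
    rcases lt_or_eq_of_le hmM with h | h
    · exact h
    · exfalso
      obtain ⟨p, hp, q, hq, hpq⟩ := Finset.one_lt_card.mp (lt_of_lt_of_le one_lt_two hcard)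
      have hz : ∀ r ∈ P,
          min (M ustar - (inner ℝ r ustar : ℝ)) ((inner ℝ r ustar : ℝ) - m ustar) = 0 := by
        intro r hr
        have h1 := hmle r hr; have h2' := hMge r hr
        have : (inner ℝ r ustar : ℝ) = m ustar := by linarith
        simp [this, ← h]
      have hw0 : w ustar = 0 := by rw [hwc, hz c hcP]
      exact h2 p hp q hq hpq (by rw [hz p hp, hw0]) (by rw [hz q hq, hw0])
  have hab : a ≠ b := fun h => by
    rw [h] at hma; exact absurd (hma.trans hMb.symm) (ne_of_lt hmltM)
  -- w > 0
  have hvala : min (M ustar - (inner ℝ a ustar : ℝ)) ((inner ℝ a ustar : ℝ) - m ustar) = 0 := by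
    rw [← hma]; simp; linarith
  have hvalb : min (M ustar - (inner ℝ b ustar : ℝ)) ((inner ℝ b ustar : ℝ) - m ustar) = 0 := by
    rw [← hMb]; simp; linarith
  have hwnn : 0 ≤ w ustar := hvala ▸ hwge a haP
  have hwpos : 0 < w ustar := by
    rcases lt_or_eq_of_le hwnn with h | h
    · exact h
    · exact absurd (hvala.trans h) (fun hh => h2 a haP b hbP hab hh (hvalb.trans h))
  -- c strictly inside
  have hcM : w ustar ≤ M ustar - (inner ℝ c ustar : ℝ) := hwc ▸ min_le_left _ _
  have hcm : w ustar ≤ (inner ℝ c ustar : ℝ) - m ustar := hwc ▸ min_le_right _ _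
  have hac : a ≠ c := fun h => by rw [h] at hma; linarith [hma ▸ hcm]
  have hbc : b ≠ c := fun h => by rw [h] at hMb; linarith [hMb ▸ hcM]
  -- no three boundary points
  have hcard3 : ∀ p q r : EuclideanSpace ℝ (Fin 2), p ∈ P → q ∈ P → r ∈ P →
      p ≠ q → p ≠ r → q ≠ r →
      ((inner ℝ p ustar : ℝ) = m ustar ∨ (inner ℝ p ustar : ℝ) = M ustar) →
      ((inner ℝ q ustar : ℝ) = m ustar ∨ (inner ℝ q ustar : ℝ) = M ustar) →
      ((inner ℝ r ustar : ℝ) = m ustar ∨ (inner ℝ r ustar : ℝ) = M ustar) → False := by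
    intro p q r hp hq hr hpq hpr hqr hbp hbq hbr
    refine absurd ?_ (not_le.mpr h3)
    have hset : {p : EuclideanSpace ℝ (Fin 2) | p ∈ P ∧
        ((inner ℝ p ustar : ℝ) = m ustar ∨ (inner ℝ p ustar : ℝ) = M ustar)} =
        ↑(P.filter fun p => (inner ℝ p ustar : ℝ) = m ustar ∨ (inner ℝ p ustar : ℝ) = M ustar) := by
      ext z; simp [Finset.mem_filter]
    rw [hset, Set.ncard_coe_finset]
    have hsub : ({p, q, r} : Finset (EuclideanSpace ℝ (Fin 2))) ⊆
        P.filter fun z => (inner ℝ z ustar : ℝ) = m ustar ∨ (inner ℝ z ustar : ℝ) = M ustar := by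
      intro z hz
      simp only [Finset.mem_insert, Finset.mem_singleton] at hz
      rcases hz with rfl | rfl | rfl <;> rw [Finset.mem_filter] <;>
        exact ⟨by assumption, by assumption⟩
    calc (3 : ℕ) = ({p, q, r} : Finset (EuclideanSpace ℝ (Fin 2))).card := by
          rw [Finset.card_insert_of_notMem (by simp [hpq, hpr]),
            Finset.card_insert_of_notMem (by simp [hqr]), Finset.card_singleton]
      _ ≤ _ := Finset.card_le_card hsub
  -- uniqueness of min and max attainers
  have huniqa : ∀ p ∈ P, p ≠ a → m ustar < (inner ℝ p ustar : ℝ) := by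
    intro p hp hpa
    refine lt_of_le_of_ne (hmle p hp) fun hEq => ?_
    have hpb : p ≠ b := fun h => by rw [h] at hEq; rw [hMb] at hmltM; linarith
    exact hcard3 p a b hp haP hbP hpa hpb hab (Or.inl hEq.symm) (Or.inl hma.symm) (Or.inr hMb.symm)
  have huniqb : ∀ p ∈ P, p ≠ b → (inner ℝ p ustar : ℝ) < M ustar := by
    intro p hp hpb
    refine lt_of_le_of_ne (hMge p hp) fun hEq => ?_
    have hpa : p ≠ a := fun h => by rw [h] at hEq; rw [hma] at hmltM; linarith
    exact hcard3 p a b hp haP hbP hpa hpb hab (Or.inr hEq) (Or.inl hma.symm) (Or.inr hMb.symm)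
  -- perpendicular unit vector
  obtain ⟨v, hv1, hv2⟩ : ∃ v : EuclideanSpace ℝ (Fin 2), ‖v‖ = 1 ∧ (inner ℝ ustar v : ℝ) = 0 := by
    refine ⟨(EuclideanSpace.equiv (Fin 2) ℝ).symm ![-(ustar 1), ustar 0], ?_, ?_⟩
    · have h := hustar
      rw [EuclideanSpace.norm_eq] at h ⊢
      simpa [Fin.sum_univ_two, add_comm] using h
    · simp [PiLp.inner_apply, Fin.sum_univ_two, RCLike.inner_apply]
      ring
  -- abbreviations
  set Ky : ℝ := P.sup' hP fun p => |(inner ℝ p v : ℝ)| with hKydef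
  have hKy : 0 ≤ Ky := le_trans (abs_nonneg ((inner ℝ a v : ℝ))) (Finset.le_sup' (fun p => |(inner ℝ p v : ℝ)|) haP)
  have hyb : ∀ p ∈ P, |(inner ℝ p v : ℝ)| ≤ Ky := fun p hp => Finset.le_sup' (fun p => |(inner ℝ p v : ℝ)|) hp
  -- epsilons
  have hPa : (P.erase a).Nonempty := ⟨b, Finset.mem_erase.mpr ⟨hab.symm, hbP⟩⟩
  have hPb : (P.erase b).Nonempty := ⟨a, Finset.mem_erase.mpr ⟨hab, haP⟩⟩
  have hPc : (P.erase c).Nonempty := ⟨a, Finset.mem_erase.mpr ⟨hac, haP⟩⟩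
  set ε1 : ℝ := (P.erase a).inf' hPa fun p => (inner ℝ p ustar : ℝ) - m ustar with hε1def
  set ε2 : ℝ := (P.erase b).inf' hPb fun p => M ustar - (inner ℝ p ustar : ℝ) with hε2def
  set ε3 : ℝ := (P.erase c).inf' hPc fun p =>
    w ustar - min (M ustar - (inner ℝ p ustar : ℝ)) ((inner ℝ p ustar : ℝ) - m ustar) with hε3def
  have hε1 : 0 < ε1 := (Finset.lt_inf'_iff _).mpr fun p hp => by
    have hm' := Finset.mem_erase.mp hp
    have := huniqa p hm'.2 hm'.1; linarith
  have hε2 : 0 < ε2 := (Finset.lt_inf'_iff _).mpr fun p hp => by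
    have hm' := Finset.mem_erase.mp hp
    have := huniqb p hm'.2 hm'.1; linarith
  have hε3 : 0 < ε3 := (Finset.lt_inf'_iff _).mpr fun p hp => by
    have hm' := Finset.mem_erase.mp hp
    have := hcuniq p hm'.2 hm'.1; linarith
  have hε1le : ∀ p ∈ P, p ≠ a → ε1 ≤ (inner ℝ p ustar : ℝ) - m ustar := fun p hp hpa =>
    Finset.inf'_le _ (Finset.mem_erase.mpr ⟨hpa, hp⟩)
  have hε2le : ∀ p ∈ P, p ≠ b → ε2 ≤ M ustar - (inner ℝ p ustar : ℝ) := fun p hp hpb =>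
    Finset.inf'_le _ (Finset.mem_erase.mpr ⟨hpb, hp⟩)
  have hε3le : ∀ p ∈ P, p ≠ c →
      ε3 ≤ w ustar - min (M ustar - (inner ℝ p ustar : ℝ)) ((inner ℝ p ustar : ℝ) - m ustar) := fun p hp hpc =>
    Finset.inf'_le _ (Finset.mem_erase.mpr ⟨hpc, hp⟩)
  set E : ℝ := min (min ε1 ε2) ε3 with hEdef
  have hE : 0 < E := lt_min (lt_min hε1 hε2) hε3
  -- choice of branch slope
  obtain ⟨B, hB⟩ : ∃ B : ℝ, ∀ t : ℝ,
      min (((inner ℝ b ustar : ℝ) - (inner ℝ c ustar : ℝ)) + t * ((inner ℝ b v : ℝ) - (inner ℝ c v : ℝ))) (((inner ℝ c ustar : ℝ) - (inner ℝ a ustar : ℝ)) + t * ((inner ℝ c v : ℝ) - (inner ℝ a v : ℝ))) ≤ w ustar + t * B := by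
    have hc' : min ((inner ℝ b ustar : ℝ) - (inner ℝ c ustar : ℝ)) ((inner ℝ c ustar : ℝ) - (inner ℝ a ustar : ℝ)) = w ustar := by
      rw [hma, hMb] at hwc; exact hwc.symm
    rcases min_eq_iff.mp hc' with ⟨hEq, _⟩ | ⟨hEq, _⟩
    · exact ⟨(inner ℝ b v : ℝ) - (inner ℝ c v : ℝ), fun t => le_trans (min_le_left _ _) (by rw [hEq])⟩
    · exact ⟨(inner ℝ c v : ℝ) - (inner ℝ a v : ℝ), fun t => le_trans (min_le_right _ _) (by rw [hEq])⟩
  -- small step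
  obtain ⟨δ, hδ0, hδ⟩ : ∃ δ : ℝ, 0 < δ ∧ δ * (2 * Ky) < E := by
    refine ⟨E / (2 * Ky + 1), by positivity, ?_⟩
    rw [div_mul_eq_mul_div, div_lt_iff₀ (by positivity)]
    exact (mul_lt_mul_iff_right₀ hE).mpr (by linarith)
  set t : ℝ := (if B ≤ 0 then 1 else -1) * δ with htdef
  have htne : t ≠ 0 := by
    rw [htdef]; split <;> simp [ne_of_gt hδ0]
  have htabs : |t| = δ := by
    rw [htdef, abs_mul]; split <;> simp [abs_of_pos hδ0]
  have htB : t * B ≤ 0 := by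
    rw [htdef]; split
    · next h => nlinarith
    · next h => push_neg at h; nlinarith
  set s : ℝ := Real.sqrt (1 + t ^ 2) with hsdef
  have hs1 : 1 < s := by
    have ht2 : (0:ℝ) < t ^ 2 := by positivity
    calc (1:ℝ) = Real.sqrt 1 := Real.sqrt_one.symm
      _ < Real.sqrt (1 + t ^ 2) := Real.sqrt_lt_sqrt (by norm_num) (by linarith)
      _ = s := hsdef.symm
  have hs0 : 0 < s := lt_trans one_pos hs1
  -- the perturbed direction
  set u' : EuclideanSpace ℝ (Fin 2) := s⁻¹ • (ustar + t • v) with hu'def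
  have hnorm : ‖ustar + t • v‖ = s := by
    have hsq : ‖ustar + t • v‖ ^ 2 = 1 + t ^ 2 := by
      rw [norm_add_sq_real, real_inner_smul_right, hv2, norm_smul, hustar, hv1]
      simp [sq_abs]
    rw [hsdef, ← hsq, Real.sqrt_sq (norm_nonneg _)]
  have hu'norm : ‖u'‖ = 1 := by
    rw [hu'def, norm_smul, hnorm, Real.norm_eq_abs, abs_of_pos (inv_pos.mpr hs0), inv_mul_cancel₀ (ne_of_gt hs0)]
  have hip : ∀ p : EuclideanSpace ℝ (Fin 2), (inner ℝ p u' : ℝ) = s⁻¹ * ((inner ℝ p ustar : ℝ) + t * (inner ℝ p v : ℝ)) := by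
    intro p
    rw [hu'def, real_inner_smul_right, inner_add_right, real_inner_smul_right]
  -- bound on cross terms
  have habs : ∀ p ∈ P, ∀ q ∈ P, |t * ((inner ℝ p v : ℝ) - (inner ℝ q v : ℝ))| < E := by
    intro p hp q hq
    rw [abs_mul, htabs]
    calc δ * |(inner ℝ p v : ℝ) - (inner ℝ q v : ℝ)| ≤ δ * (2 * Ky) := by
          apply mul_le_mul_of_nonneg_left _ (le_of_lt hδ0)
          calc |(inner ℝ p v : ℝ) - (inner ℝ q v : ℝ)| ≤ |(inner ℝ p v : ℝ)| + |(inner ℝ q v : ℝ)| := abs_sub _ _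
            _ ≤ Ky + Ky := add_le_add (hyb p hp) (hyb q hq)
            _ = 2 * Ky := by ring
      _ < E := hδ
  -- strict max/min at b / a for u'
  have hlt_b : ∀ p ∈ P, p ≠ b → (inner ℝ p u' : ℝ) < (inner ℝ b u' : ℝ) := by
    intro p hp hpb
    rw [hip, hip]
    apply mul_lt_mul_of_pos_left _ (inv_pos.mpr hs0)
    have h1 := hε2le p hp hpb
    have h2' := habs b hbP p hp
    have h3' : min ε1 ε2 ≤ ε2 := min_le_right _ _
    have h4' : E ≤ min ε1 ε2 := min_le_left _ _
    have := abs_lt.mp h2'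
    linarith
  have hgt_a : ∀ p ∈ P, p ≠ a → (inner ℝ a u' : ℝ) < (inner ℝ p u' : ℝ) := by
    intro p hp hpa
    rw [hip, hip]
    apply mul_lt_mul_of_pos_left _ (inv_pos.mpr hs0)
    have h1 := hε1le p hp hpa
    have h2' := habs p hp a haP
    have h3' : min ε1 ε2 ≤ ε1 := min_le_left _ _
    have h4' : E ≤ min ε1 ε2 := min_le_left _ _
    have := abs_lt.mp h2'
    linarith
  have hMu' : M u' = (inner ℝ b u' : ℝ) := by
    rw [hM]
    apply le_antisymm
    · apply Finset.sup'_le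
      intro p hp
      rcases eq_or_ne p b with rfl | hpb
      · exact le_refl _
      · exact le_of_lt (hlt_b p hp hpb)
    · exact Finset.le_sup' (fun p => (inner ℝ p u' : ℝ)) hbP
  have hmu' : m u' = (inner ℝ a u' : ℝ) := by
    rw [hm]
    apply le_antisymm
    · exact Finset.inf'_le _ haP
    · apply Finset.le_inf'
      intro p hp
      rcases eq_or_ne p a with rfl | hpa
      · exact le_refl _
      · exact le_of_lt (hgt_a p hp hpa)
  -- key scaling lemma
  have hkey : ∀ L : ℝ, L ≤ w ustar → s⁻¹ * L < w ustar := by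
    intro L hL
    rcases le_or_gt L 0 with h | h
    · exact lt_of_le_of_lt (mul_nonpos_of_nonneg_of_nonpos (le_of_lt (inv_pos.mpr hs0)) h) hwpos
    · calc s⁻¹ * L < 1 * L := by
            apply mul_lt_mul_of_pos_right _ h
            rw [inv_lt_one_iff₀]; right; exact hs1
        _ = L := one_mul L
        _ ≤ w ustar := hL
  -- show w u' < w ustar
  have hwlt : w u' < w ustar := by
    rw [hw u']
    rw [Finset.sup'_lt_iff]
    intro p hp
    rw [hMu', hmu', hip, hip, hip]
    have hexp1 : s⁻¹ * ((inner ℝ b ustar : ℝ) + t * (inner ℝ b v : ℝ)) - s⁻¹ * ((inner ℝ p ustar : ℝ) + t * (inner ℝ p v : ℝ))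
        = s⁻¹ * (((inner ℝ b ustar : ℝ) - (inner ℝ p ustar : ℝ)) + t * ((inner ℝ b v : ℝ) - (inner ℝ p v : ℝ))) := by ring
    have hexp2 : s⁻¹ * ((inner ℝ p ustar : ℝ) + t * (inner ℝ p v : ℝ)) - s⁻¹ * ((inner ℝ a ustar : ℝ) + t * (inner ℝ a v : ℝ))
        = s⁻¹ * (((inner ℝ p ustar : ℝ) - (inner ℝ a ustar : ℝ)) + t * ((inner ℝ p v : ℝ) - (inner ℝ a v : ℝ))) := by ring
    rw [hexp1, hexp2, ← mul_min_of_nonneg _ _ (le_of_lt (inv_pos.mpr hs0))]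
    apply hkey
    rcases eq_or_ne p c with hpc | hpc
    · subst hpc
      calc min (((inner ℝ b ustar : ℝ) - (inner ℝ p ustar : ℝ)) + t * ((inner ℝ b v : ℝ) - (inner ℝ p v : ℝ))) (((inner ℝ p ustar : ℝ) - (inner ℝ a ustar : ℝ)) + t * ((inner ℝ p v : ℝ) - (inner ℝ a v : ℝ)))
          ≤ w ustar + t * B := hB t
        _ ≤ w ustar := by linarith
    · -- other points
      have h1 := hε3le p hp hpc
      have h4' : E ≤ ε3 := min_le_right _ _
      rcases le_total (M ustar - (inner ℝ p ustar : ℝ)) ((inner ℝ p ustar : ℝ) - m ustar) with hmin | hmin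
      · have : min (M ustar - (inner ℝ p ustar : ℝ)) ((inner ℝ p ustar : ℝ) - m ustar) = M ustar - (inner ℝ p ustar : ℝ) := min_eq_left hmin
        rw [this] at h1
        have h2' := habs b hbP p hp
        have := abs_lt.mp h2'
        calc min (((inner ℝ b ustar : ℝ) - (inner ℝ p ustar : ℝ)) + t * ((inner ℝ b v : ℝ) - (inner ℝ p v : ℝ))) (((inner ℝ p ustar : ℝ) - (inner ℝ a ustar : ℝ)) + t * ((inner ℝ p v : ℝ) - (inner ℝ a v : ℝ)))
            ≤ ((inner ℝ b ustar : ℝ) - (inner ℝ p ustar : ℝ)) + t * ((inner ℝ b v : ℝ) - (inner ℝ p v : ℝ)) := min_le_left _ _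
          _ ≤ w ustar := by rw [← hMb]; linarith
      · have : min (M ustar - (inner ℝ p ustar : ℝ)) ((inner ℝ p ustar : ℝ) - m ustar) = (inner ℝ p ustar : ℝ) - m ustar := min_eq_right hmin
        rw [this] at h1
        have h2' := habs p hp a haP
        have := abs_lt.mp h2'
        calc min (((inner ℝ b ustar : ℝ) - (inner ℝ p ustar : ℝ)) + t * ((inner ℝ b v : ℝ) - (inner ℝ p v : ℝ))) (((inner ℝ p ustar : ℝ) - (inner ℝ a ustar : ℝ)) + t * ((inner ℝ p v : ℝ) - (inner ℝ a v : ℝ)))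
            ≤ ((inner ℝ p ustar : ℝ) - (inner ℝ a ustar : ℝ)) + t * ((inner ℝ p v : ℝ) - (inner ℝ a v : ℝ)) := min_le_right _ _
          _ ≤ w ustar := by rw [← hma]; linarith
  linarith [hopt u' hu'norm]
end

section
/- Let P ⊆ ℝ² be a finite set and Q ⊆ P a subset with at least 2 elements. For a unit vector u ∈ ℝ² put m(u) := min_{p∈P} ⟨p,u⟩, M(u) := max_{p∈P} ⟨p,u⟩, and w_Q(u) := max_{q∈Q} min(M(u) − ⟨q,u⟩, ⟨q,u⟩ − m(u)). Suppose u* is a unit vector with w_Q(u*) ≤ w_Q(u) for every unit vector u. Then at least one of the following holds: (a) the set {p ∈ P : ⟨p,u*⟩ = m(u*) or ⟨p,u*⟩ = M(u*)} has at least 3 elements; or (b) there exist two distinct points q₁, q₂ ∈ Q with min(M(u*) − ⟨qᵢ,u*⟩, ⟨qᵢ,u*⟩ − m(u*)) = w_Q(u*) for i = 1, 2. -/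
open Filter Topology Real

private lemma exists_perp2 (u : EuclideanSpace ℝ (Fin 2)) (hu : ‖u‖ = 1) :
    ∃ v : EuclideanSpace ℝ (Fin 2), (inner ℝ u v : ℝ) = 0 ∧ ‖v‖ = 1 := by
  refine ⟨(WithLp.equiv 2 (Fin 2 → ℝ)).symm ![-(u 1), u 0], ?_, ?_⟩
  · simp [PiLp.inner_apply, Fin.sum_univ_two, RCLike.inner_apply]
    ring
  · rw [EuclideanSpace.norm_eq] at hu ⊢
    simp only [WithLp.equiv_symm_apply, PiLp.toLp_apply, Fin.sum_univ_two] at hu ⊢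
    simp only [Matrix.cons_val_zero, Matrix.cons_val_one, Matrix.head_cons, norm_neg]
    rw [add_comm]
    simpa using hu

/-- Structure of an optimal `P`-constrained double-strip (Lemma 4 of the paper):
if the unit vector `u*` minimizes
`w_Q(u) = max_{q∈Q} min (M(u) - ⟪q,u⟫) (⟪q,u⟫ - m(u))`, the width of a
`P`-constrained double-strip with normal `u` enclosing `Q ⊆ P` with `|Q| ≥ 2`,
then either three points of `P` lie on the boundary of the minimum-width strip
enclosing `P` in direction `u*`, or two points of `Q` attain the width
`w_Q(u*)`. -/
theorem optimal_constrained_double_strip_configuration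
    (P Q : Finset (EuclideanSpace ℝ (Fin 2))) (hP : P.Nonempty)
    (hQ : Q.Nonempty) (hQP : Q ⊆ P) (hcard : 2 ≤ Q.card)
    (m M wQ : EuclideanSpace ℝ (Fin 2) → ℝ)
    (hm : ∀ u, m u = P.inf' hP fun p => (inner ℝ p u : ℝ))
    (hM : ∀ u, M u = P.sup' hP fun p => (inner ℝ p u : ℝ))
    (hw : ∀ u, wQ u = Q.sup' hQ fun q =>
      min (M u - (inner ℝ q u : ℝ)) ((inner ℝ q u : ℝ) - m u))
    (ustar : EuclideanSpace ℝ (Fin 2)) (hustar : ‖ustar‖ = 1)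
    (hopt : ∀ u : EuclideanSpace ℝ (Fin 2), ‖u‖ = 1 → wQ ustar ≤ wQ u) :
    3 ≤ {p : EuclideanSpace ℝ (Fin 2) | p ∈ P ∧
        ((inner ℝ p ustar : ℝ) = m ustar ∨ (inner ℝ p ustar : ℝ) = M ustar)}.ncard ∨
    ∃ q₁ ∈ Q, ∃ q₂ ∈ Q, q₁ ≠ q₂ ∧
      min (M ustar - (inner ℝ q₁ ustar : ℝ)) ((inner ℝ q₁ ustar : ℝ) - m ustar) = wQ ustar ∧
      min (M ustar - (inner ℝ q₂ ustar : ℝ)) ((inner ℝ q₂ ustar : ℝ) - m ustar) = wQ ustar := by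
  classical
  by_cases hb : ∃ q₁ ∈ Q, ∃ q₂ ∈ Q, q₁ ≠ q₂ ∧
      min (M ustar - (inner ℝ q₁ ustar : ℝ)) ((inner ℝ q₁ ustar : ℝ) - m ustar) = wQ ustar ∧
      min (M ustar - (inner ℝ q₂ ustar : ℝ)) ((inner ℝ q₂ ustar : ℝ) - m ustar) = wQ ustar
  · exact Or.inr hb
  by_cases ha : 3 ≤ {p : EuclideanSpace ℝ (Fin 2) | p ∈ P ∧
        ((inner ℝ p ustar : ℝ) = m ustar ∨ (inner ℝ p ustar : ℝ) = M ustar)}.ncard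
  · exact Or.inl ha
  exfalso
  -- basic bounds
  have hmle : ∀ p ∈ P, m ustar ≤ (inner ℝ p ustar : ℝ) := fun p hp => by
    rw [hm]; exact Finset.inf'_le (fun p => (inner ℝ p ustar : ℝ)) hp
  have hMge : ∀ p ∈ P, (inner ℝ p ustar : ℝ) ≤ M ustar := fun p hp => by
    rw [hM]; exact Finset.le_sup' (fun p => (inner ℝ p ustar : ℝ)) hp
  have hvle : ∀ q ∈ Q,
      min (M ustar - (inner ℝ q ustar : ℝ)) ((inner ℝ q ustar : ℝ) - m ustar) ≤ wQ ustar := by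
    intro q hq; rw [hw]
    exact Finset.le_sup'
      (fun q => min (M ustar - (inner ℝ q ustar : ℝ)) ((inner ℝ q ustar : ℝ) - m ustar)) hq
  have hv0 : ∀ q ∈ Q,
      0 ≤ min (M ustar - (inner ℝ q ustar : ℝ)) ((inner ℝ q ustar : ℝ) - m ustar) := by
    intro q hq
    exact le_min (sub_nonneg.mpr (hMge q (hQP hq))) (sub_nonneg.mpr (hmle q (hQP hq)))
  -- attainer of the sup
  obtain ⟨q0, hq0Q, hq0⟩ :=
    Finset.exists_mem_eq_sup' hQ
      (fun q => min (M ustar - (inner ℝ q ustar : ℝ)) ((inner ℝ q ustar : ℝ) - m ustar))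
  rw [← hw ustar] at hq0
  -- positivity of the width
  have hw0 : 0 < wQ ustar := by
    rcases lt_or_ge 0 (wQ ustar) with h | h
    · exact h
    exfalso; apply hb
    obtain ⟨a, haQ, b, hbQ, hab⟩ := Finset.one_lt_card.mp hcard
    exact ⟨a, haQ, b, hbQ, hab,
      le_antisymm (hvle a haQ) (h.trans (hv0 a haQ)),
      le_antisymm (hvle b hbQ) (h.trans (hv0 b hbQ))⟩
  -- uniqueness of the attainer
  have huniq : ∀ q ∈ Q, q ≠ q0 →
      min (M ustar - (inner ℝ q ustar : ℝ)) ((inner ℝ q ustar : ℝ) - m ustar) < wQ ustar := by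
    intro q hq hne
    rcases lt_or_eq_of_le (hvle q hq) with h | h
    · exact h
    · exact absurd ⟨q, hq, q0, hq0Q, hne, h, hq0.symm⟩ hb
  -- m < M
  have hmM : m ustar < M ustar := by
    by_contra h
    push_neg at h
    have h1 := hmle q0 (hQP hq0Q)
    have h2 := hMge q0 (hQP hq0Q)
    have h3 := min_le_left (M ustar - (inner ℝ q0 ustar : ℝ)) ((inner ℝ q0 ustar : ℝ) - m ustar)
    linarith [hq0]
  -- attainers of the inf and sup over P
  obtain ⟨pmin, hpminP, hpmin⟩ := Finset.exists_mem_eq_inf' hP (fun p => (inner ℝ p ustar : ℝ))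
  rw [← hm ustar] at hpmin
  obtain ⟨pmax, hpmaxP, hpmax⟩ := Finset.exists_mem_eq_sup' hP (fun p => (inner ℝ p ustar : ℝ))
  rw [← hM ustar] at hpmax
  have hpne : pmin ≠ pmax := by
    intro h
    rw [h, ← hpmax] at hpmin
    exact hmM.ne hpmin
  -- the boundary set equals {pmin, pmax}
  push_neg at ha
  set B : Set (EuclideanSpace ℝ (Fin 2)) := {p | p ∈ P ∧
      ((inner ℝ p ustar : ℝ) = m ustar ∨ (inner ℝ p ustar : ℝ) = M ustar)} with hBdef
  have hBfin : B.Finite := P.finite_toSet.subset (fun x hx => hx.1)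
  have hsub : ({pmin, pmax} : Set (EuclideanSpace ℝ (Fin 2))) ⊆ B := by
    intro x hx
    rcases hx with h | h
    · exact h ▸ ⟨hpminP, Or.inl hpmin.symm⟩
    · rw [Set.mem_singleton_iff] at h
      exact h ▸ ⟨hpmaxP, Or.inr hpmax.symm⟩
  have hBeq : B = {pmin, pmax} := by
    refine (Set.eq_of_subset_of_ncard_le hsub ?_ hBfin).symm
    rw [Set.ncard_pair hpne]
    omega
  have huniqmin : ∀ p ∈ P, (inner ℝ p ustar : ℝ) = m ustar → p = pmin := by
    intro p hp hpm
    have hpB : p ∈ B := ⟨hp, Or.inl hpm⟩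
    rw [hBeq] at hpB
    rcases hpB with h | h
    · exact h
    · rw [Set.mem_singleton_iff] at h
      exfalso
      rw [h, ← hpmax] at hpm
      exact hmM.ne' hpm
  have huniqmax : ∀ p ∈ P, (inner ℝ p ustar : ℝ) = M ustar → p = pmax := by
    intro p hp hpm
    have hpB : p ∈ B := ⟨hp, Or.inr hpm⟩
    rw [hBeq] at hpB
    rcases hpB with h | h
    · exfalso
      rw [h, ← hpmin] at hpm
      exact hmM.ne hpm
    · exact Set.mem_singleton_iff.mp h
  -- perpendicular direction and rotated vectors
  obtain ⟨v, hv, hv1⟩ := exists_perp2 ustar hustar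
  set U : ℝ → EuclideanSpace ℝ (Fin 2) :=
    fun θ => Real.cos θ • ustar + Real.sin θ • v with hU
  have hip : ∀ (a : EuclideanSpace ℝ (Fin 2)) (θ : ℝ),
      (inner ℝ a (U θ) : ℝ) = Real.cos θ * (inner ℝ a ustar : ℝ) + Real.sin θ * (inner ℝ a v : ℝ) := by
    intro a θ
    simp only [hU, inner_add_right, real_inner_smul_right]
  have hu1 : (inner ℝ ustar ustar : ℝ) = 1 := by
    rw [real_inner_self_eq_norm_sq, hustar]; norm_num
  have hv1' : (inner ℝ v v : ℝ) = 1 := by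
    rw [real_inner_self_eq_norm_sq, hv1]; norm_num
  have hvu : (inner ℝ v ustar : ℝ) = 0 := by rw [real_inner_comm]; exact hv
  have hUnorm : ∀ θ, ‖U θ‖ = 1 := by
    intro θ
    have h4 : (inner ℝ (U θ) (U θ) : ℝ) = 1 := by
      simp only [hU, inner_add_left, inner_add_right, real_inner_smul_left,
        real_inner_smul_right, hu1, hv1', hv, hvu]
      ring_nf
      nlinarith [Real.sin_sq_add_cos_sq θ]
    have h5 : ‖U θ‖ ^ 2 = 1 := by rw [← real_inner_self_eq_norm_sq, h4]
    nlinarith [norm_nonneg (U θ)]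
  have hcont : ∀ a : EuclideanSpace ℝ (Fin 2),
      Continuous fun θ => (inner ℝ a (U θ) : ℝ) := by
    intro a
    have : (fun θ => (inner ℝ a (U θ) : ℝ)) =
        fun θ => Real.cos θ * (inner ℝ a ustar : ℝ) + Real.sin θ * (inner ℝ a v : ℝ) :=
      funext (hip a)
    rw [this]
    fun_prop
  have hU0 : U 0 = ustar := by simp [hU]
  -- eventual facts near θ = 0
  have E1 : ∀ᶠ θ in 𝓝 (0 : ℝ), ∀ p ∈ P, (inner ℝ p (U θ) : ℝ) ≤ inner ℝ pmax (U θ) := by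
    rw [eventually_all_finset]
    intro p hp
    by_cases hpe : p = pmax
    · subst hpe; exact Eventually.of_forall fun θ => le_rfl
    · have h0 : (inner ℝ p (U 0) : ℝ) < inner ℝ pmax (U 0) := by
        rw [hU0, ← hpmax]
        rcases lt_or_eq_of_le (hMge p hp) with h | h
        · exact h
        · exact absurd (huniqmax p hp h) hpe
      exact ((hcont p).continuousAt.eventually_lt (hcont pmax).continuousAt h0).mono
        fun θ h => h.le
  have E2 : ∀ᶠ θ in 𝓝 (0 : ℝ), ∀ p ∈ P, (inner ℝ pmin (U θ) : ℝ) ≤ inner ℝ p (U θ) := by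
    rw [eventually_all_finset]
    intro p hp
    by_cases hpe : p = pmin
    · subst hpe; exact Eventually.of_forall fun θ => le_rfl
    · have h0 : (inner ℝ pmin (U 0) : ℝ) < inner ℝ p (U 0) := by
        rw [hU0, ← hpmin]
        rcases lt_or_eq_of_le (hmle p hp) with h | h
        · exact h
        · exact absurd (huniqmin p hp h.symm) hpe
      exact ((hcont pmin).continuousAt.eventually_lt (hcont p).continuousAt h0).mono
        fun θ h => h.le
  have E3 : ∀ᶠ θ in 𝓝 (0 : ℝ), ∀ q ∈ Q, q ≠ q0 →
      min ((inner ℝ pmax (U θ) : ℝ) - inner ℝ q (U θ))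
        ((inner ℝ q (U θ) : ℝ) - inner ℝ pmin (U θ)) < wQ ustar := by
    rw [eventually_all_finset]
    intro q hq
    by_cases hqe : q = q0
    · subst hqe
      exact Eventually.of_forall fun θ h => absurd rfl h
    · have h0 : min ((inner ℝ pmax (U 0) : ℝ) - inner ℝ q (U 0))
          ((inner ℝ q (U 0) : ℝ) - inner ℝ pmin (U 0)) < wQ ustar := by
        rw [hU0, ← hpmax, ← hpmin]
        exact huniq q hq hqe
      have hcmin : ContinuousAt (fun θ => min ((inner ℝ pmax (U θ) : ℝ) - inner ℝ q (U θ))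
          ((inner ℝ q (U θ) : ℝ) - inner ℝ pmin (U θ))) 0 :=
        (((hcont pmax).sub (hcont q)).min ((hcont q).sub (hcont pmin))).continuousAt
      exact (hcmin.eventually_lt continuousAt_const h0).mono fun θ h _ => h
  have Eall := E1.and (E2.and E3)
  -- a linear upper bound for the value at q0
  obtain ⟨c, hcbound⟩ : ∃ c : ℝ, ∀ θ : ℝ,
      min ((inner ℝ pmax (U θ) : ℝ) - inner ℝ q0 (U θ))
        ((inner ℝ q0 (U θ) : ℝ) - inner ℝ pmin (U θ)) ≤
        Real.cos θ * wQ ustar + Real.sin θ * c := by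
    rcases min_cases (M ustar - (inner ℝ q0 ustar : ℝ)) ((inner ℝ q0 ustar : ℝ) - m ustar) with
      ⟨hmin, _⟩ | ⟨hmin, _⟩
    · refine ⟨(inner ℝ pmax v : ℝ) - inner ℝ q0 v, fun θ => ?_⟩
      have hF : (inner ℝ pmax ustar : ℝ) - inner ℝ q0 ustar = wQ ustar := by
        rw [← hpmax]; exact (hq0.trans hmin).symm
      have heq : (inner ℝ pmax (U θ) : ℝ) - inner ℝ q0 (U θ) =
          Real.cos θ * wQ ustar + Real.sin θ * ((inner ℝ pmax v : ℝ) - inner ℝ q0 v) := by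
        rw [hip, hip]
        linear_combination Real.cos θ * hF
      rw [← heq]
      exact min_le_left _ _
    · refine ⟨(inner ℝ q0 v : ℝ) - inner ℝ pmin v, fun θ => ?_⟩
      have hG : (inner ℝ q0 ustar : ℝ) - inner ℝ pmin ustar = wQ ustar := by
        rw [← hpmin]; exact (hq0.trans hmin).symm
      have heq : (inner ℝ q0 (U θ) : ℝ) - inner ℝ pmin (U θ) =
          Real.cos θ * wQ ustar + Real.sin θ * ((inner ℝ q0 v : ℝ) - inner ℝ pmin v) := by
        rw [hip, hip]
        linear_combination Real.cos θ * hG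
      rw [← heq]
      exact min_le_right _ _
  -- the final contradiction machinery
  have hfinal : ∀ θ : ℝ,
      (∀ p ∈ P, (inner ℝ p (U θ) : ℝ) ≤ inner ℝ pmax (U θ)) →
      (∀ p ∈ P, (inner ℝ pmin (U θ) : ℝ) ≤ inner ℝ p (U θ)) →
      (∀ q ∈ Q, q ≠ q0 →
        min ((inner ℝ pmax (U θ) : ℝ) - inner ℝ q (U θ))
          ((inner ℝ q (U θ) : ℝ) - inner ℝ pmin (U θ)) < wQ ustar) →
      Real.cos θ * wQ ustar + Real.sin θ * c < wQ ustar → False := by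
    intro θ h1 h2 h3 h4
    have hMθ : M (U θ) = inner ℝ pmax (U θ) := by
      rw [hM]
      exact le_antisymm (Finset.sup'_le _ _ h1)
        (Finset.le_sup' (fun p => (inner ℝ p (U θ) : ℝ)) hpmaxP)
    have hmθ : m (U θ) = inner ℝ pmin (U θ) := by
      rw [hm]
      exact le_antisymm (Finset.inf'_le (fun p => (inner ℝ p (U θ) : ℝ)) hpminP)
        (Finset.le_inf' _ _ h2)
    have hlt : wQ (U θ) < wQ ustar := by
      rw [hw (U θ)]
      refine (Finset.sup'_lt_iff hQ).mpr fun q hq => ?_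
      rw [hMθ, hmθ]
      by_cases hqe : q = q0
      · subst hqe
        exact lt_of_le_of_lt (hcbound θ) h4
      · exact h3 q hq hqe
    exact absurd (hopt (U θ) (hUnorm θ)) (not_le.mpr hlt)
  -- choose the direction of rotation according to the sign of c
  have hIoo : ∀ᶠ t in 𝓝[>] (0 : ℝ), t ∈ Set.Ioo 0 (π / 2) :=
    Ioo_mem_nhdsGT_of_mem ⟨le_rfl, by positivity⟩
  by_cases hc : c ≤ 0
  · have hev : ∀ᶠ t in 𝓝[>] (0 : ℝ), _ := Eall.filter_mono nhdsWithin_le_nhds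
    obtain ⟨t, ⟨hE1, hE2, hE3⟩, ht⟩ := (hev.and hIoo).exists
    have hsin : 0 < Real.sin t :=
      Real.sin_pos_of_pos_of_lt_pi ht.1 (by linarith [Real.pi_pos, ht.2])
    have hcos : Real.cos t < 1 := by
      have := Real.cos_lt_cos_of_nonneg_of_le_pi le_rfl
        (by linarith [Real.pi_pos, ht.2]) ht.1
      rwa [Real.cos_zero] at this
    refine hfinal t hE1 hE2 hE3 ?_
    nlinarith [mul_nonneg hsin.le (neg_nonneg.mpr hc)]
  · push_neg at hc
    have htend : Tendsto (fun t : ℝ => -t) (𝓝[>] (0 : ℝ)) (𝓝 (0 : ℝ)) := by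
      have h := (continuous_neg : Continuous fun t : ℝ => -t).tendsto 0
      rw [neg_zero] at h
      exact h.mono_left nhdsWithin_le_nhds
    have hev := htend.eventually Eall
    obtain ⟨t, ⟨hE1, hE2, hE3⟩, ht⟩ := (hev.and hIoo).exists
    have hsin : 0 < Real.sin t :=
      Real.sin_pos_of_pos_of_lt_pi ht.1 (by linarith [Real.pi_pos, ht.2])
    have hcos : Real.cos t < 1 := by
      have := Real.cos_lt_cos_of_nonneg_of_le_pi le_rfl
        (by linarith [Real.pi_pos, ht.2]) ht.1
      rwa [Real.cos_zero] at this
    refine hfinal (-t) hE1 hE2 hE3 ?_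
    rw [Real.cos_neg, Real.sin_neg]
    nlinarith [mul_pos hsin hc]
end

section
/- Let P ⊆ ℝ² be a finite nonempty set and let u, v ∈ ℝ² be linearly independent unit vectors. Put m_u := min_{p∈P} ⟨p,u⟩, M_u := max_{p∈P} ⟨p,u⟩, m_v := min_{p∈P} ⟨p,v⟩, M_v := max_{p∈P} ⟨p,v⟩, and for p ∈ P set d_p^u := min(M_u − ⟨p,u⟩, ⟨p,u⟩ − m_u) and d_p^v := min(M_v − ⟨p,v⟩, ⟨p,v⟩ − m_v). Then w* := max_{p∈P} min(d_p^u, d_p^v) is the least element of the set of all w ≥ 0 for which there exist reals c₁, d₁, c₂, d₂ with c₁ + w ≤ d₁ − w and c₂ + w ≤ d₂ − w such that every p ∈ P satisfies c₁ ≤ ⟨p,u⟩ ≤ d₁ and c₂ ≤ ⟨p,v⟩ ≤ d₂, and additionally ⟨p,u⟩ ≤ c₁ + w, or ⟨p,u⟩ ≥ d₁ − w, or ⟨p,v⟩ ≤ c₂ + w, or ⟨p,v⟩ ≥ d₂ − w. In other words, w* is the minimum width of a parallelogram annulus with side normals u and v enclosing P, and it is attained by the annulus whose outer parallelogram is the intersection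 of the two minimum-width strips enclosing P with normals u and v. -/
/-- Minimum-width parallelogram annulus with fixed side normals: for a finite
nonempty `P ⊆ ℝ²` and linearly independent unit vectors `u, v`, the value
`w* = max_{p∈P} min (d_p^u) (d_p^v)` is the least width `w ≥ 0` of a
parallelogram annulus with side normals `u` and `v` enclosing `P`; it is
attained by the annulus whose outer parallelogram is the intersection of the
two minimum-width strips enclosing `P`. -/
theorem minWidth_parallelogram_annulus_fixed_orientations
    (P : Finset (EuclideanSpace ℝ (Fin 2))) (hP : P.Nonempty)
    (u v : EuclideanSpace ℝ (Fin 2)) (hu : ‖u‖ = 1) (hv : ‖v‖ = 1)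
    (huv : LinearIndependent ℝ ![u, v])
    (mu Mu mv Mv wstar : ℝ)
    (hmu : mu = P.inf' hP fun p => (inner ℝ p u : ℝ))
    (hMu : Mu = P.sup' hP fun p => (inner ℝ p u : ℝ))
    (hmv : mv = P.inf' hP fun p => (inner ℝ p v : ℝ))
    (hMv : Mv = P.sup' hP fun p => (inner ℝ p v : ℝ))
    (hw : wstar = P.sup' hP fun p =>
      min (min (Mu - (inner ℝ p u : ℝ)) ((inner ℝ p u : ℝ) - mu))
          (min (Mv - (inner ℝ p v : ℝ)) ((inner ℝ p v : ℝ) - mv))) :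
    IsLeast {w : ℝ | 0 ≤ w ∧ ∃ c₁ d₁ c₂ d₂ : ℝ,
        c₁ + w ≤ d₁ - w ∧ c₂ + w ≤ d₂ - w ∧ ∀ p ∈ P,
          (c₁ ≤ (inner ℝ p u : ℝ) ∧ (inner ℝ p u : ℝ) ≤ d₁) ∧
          (c₂ ≤ (inner ℝ p v : ℝ) ∧ (inner ℝ p v : ℝ) ≤ d₂) ∧
          ((inner ℝ p u : ℝ) ≤ c₁ + w ∨ d₁ - w ≤ (inner ℝ p u : ℝ) ∨
           (inner ℝ p v : ℝ) ≤ c₂ + w ∨ d₂ - w ≤ (inner ℝ p v : ℝ))}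
      wstar := by
  have hmul : ∀ p ∈ P, mu ≤ (inner ℝ p u : ℝ) := by
    intro p hp; rw [hmu]; exact Finset.inf'_le (fun p => (inner ℝ p u : ℝ)) hp
  have hMuu : ∀ p ∈ P, (inner ℝ p u : ℝ) ≤ Mu := by
    intro p hp; rw [hMu]; exact Finset.le_sup' (fun p => (inner ℝ p u : ℝ)) hp
  have hmvl : ∀ p ∈ P, mv ≤ (inner ℝ p v : ℝ) := by
    intro p hp; rw [hmv]; exact Finset.inf'_le (fun p => (inner ℝ p v : ℝ)) hp
  have hMvv : ∀ p ∈ P, (inner ℝ p v : ℝ) ≤ Mv := by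
    intro p hp; rw [hMv]; exact Finset.le_sup' (fun p => (inner ℝ p v : ℝ)) hp
  have hws : ∀ p ∈ P,
      min (min (Mu - (inner ℝ p u : ℝ)) ((inner ℝ p u : ℝ) - mu))
          (min (Mv - (inner ℝ p v : ℝ)) ((inner ℝ p v : ℝ) - mv)) ≤ wstar := by
    intro p hp; rw [hw]
    exact Finset.le_sup' (fun p => min (min (Mu - (inner ℝ p u : ℝ)) ((inner ℝ p u : ℝ) - mu))
          (min (Mv - (inner ℝ p v : ℝ)) ((inner ℝ p v : ℝ) - mv))) hp
  have hwle : ∀ b : ℝ, (∀ p ∈ P,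
      min (min (Mu - (inner ℝ p u : ℝ)) ((inner ℝ p u : ℝ) - mu))
          (min (Mv - (inner ℝ p v : ℝ)) ((inner ℝ p v : ℝ) - mv)) ≤ b) → wstar ≤ b := by
    intro b h; rw [hw]; exact Finset.sup'_le _ _ h
  obtain ⟨p₀, hp₀⟩ := id hP
  have hw0 : 0 ≤ wstar := by
    have h1 := hmul p₀ hp₀
    have h2 := hMuu p₀ hp₀
    have h3 := hmvl p₀ hp₀
    have h4 := hMvv p₀ hp₀
    have := hws p₀ hp₀
    have : (0:ℝ) ≤ min (min (Mu - (inner ℝ p₀ u : ℝ)) ((inner ℝ p₀ u : ℝ) - mu))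
          (min (Mv - (inner ℝ p₀ v : ℝ)) ((inner ℝ p₀ v : ℝ) - mv)) := by
      apply le_min <;> apply le_min <;> linarith
    linarith [hws p₀ hp₀]
  constructor
  · refine ⟨hw0, mu, Mu, mv, Mv, ?_, ?_, ?_⟩
    · have : wstar ≤ (Mu - mu) / 2 := by
        apply hwle
        intro p hp
        have h1 : min (min (Mu - (inner ℝ p u : ℝ)) ((inner ℝ p u : ℝ) - mu))
            (min (Mv - (inner ℝ p v : ℝ)) ((inner ℝ p v : ℝ) - mv)) ≤ Mu - (inner ℝ p u : ℝ) :=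
          le_trans (min_le_left _ _) (min_le_left _ _)
        have h2 : min (min (Mu - (inner ℝ p u : ℝ)) ((inner ℝ p u : ℝ) - mu))
            (min (Mv - (inner ℝ p v : ℝ)) ((inner ℝ p v : ℝ) - mv)) ≤ (inner ℝ p u : ℝ) - mu :=
          le_trans (min_le_left _ _) (min_le_right _ _)
        linarith
      linarith
    · have : wstar ≤ (Mv - mv) / 2 := by
        apply hwle
        intro p hp
        have h1 : min (min (Mu - (inner ℝ p u : ℝ)) ((inner ℝ p u : ℝ) - mu))
            (min (Mv - (inner ℝ p v : ℝ)) ((inner ℝ p v : ℝ) - mv)) ≤ Mv - (inner ℝ p v : ℝ) :=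
          le_trans (min_le_right _ _) (min_le_left _ _)
        have h2 : min (min (Mu - (inner ℝ p u : ℝ)) ((inner ℝ p u : ℝ) - mu))
            (min (Mv - (inner ℝ p v : ℝ)) ((inner ℝ p v : ℝ) - mv)) ≤ (inner ℝ p v : ℝ) - mv :=
          le_trans (min_le_right _ _) (min_le_right _ _)
        linarith
      linarith
    · intro p hp
      refine ⟨⟨hmul p hp, hMuu p hp⟩, ⟨hmvl p hp, hMvv p hp⟩, ?_⟩
      have h := hws p hp
      rcases min_le_iff.mp h with h' | h'
      · rcases min_le_iff.mp h' with h'' | h''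
        · exact Or.inr (Or.inl (by linarith))
        · exact Or.inl (by linarith)
      · rcases min_le_iff.mp h' with h'' | h''
        · exact Or.inr (Or.inr (Or.inr (by linarith)))
        · exact Or.inr (Or.inr (Or.inl (by linarith)))
  · rintro w ⟨hw0', c₁, d₁, c₂, d₂, h1, h2, hall⟩
    have hc₁ : c₁ ≤ mu := by
      rw [hmu]; exact Finset.le_inf' _ _ fun p hp => (hall p hp).1.1
    have hd₁ : Mu ≤ d₁ := by
      rw [hMu]; exact Finset.sup'_le _ _ fun p hp => (hall p hp).1.2
    have hc₂ : c₂ ≤ mv := by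
      rw [hmv]; exact Finset.le_inf' _ _ fun p hp => (hall p hp).2.1.1
    have hd₂ : Mv ≤ d₂ := by
      rw [hMv]; exact Finset.sup'_le _ _ fun p hp => (hall p hp).2.1.2
    apply hwle
    intro p hp
    rcases (hall p hp).2.2 with h | h | h | h
    · calc min (min (Mu - (inner ℝ p u : ℝ)) ((inner ℝ p u : ℝ) - mu))
            (min (Mv - (inner ℝ p v : ℝ)) ((inner ℝ p v : ℝ) - mv))
          ≤ (inner ℝ p u : ℝ) - mu := le_trans (min_le_left _ _) (min_le_right _ _)
        _ ≤ w := by linarith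
    · calc min (min (Mu - (inner ℝ p u : ℝ)) ((inner ℝ p u : ℝ) - mu))
            (min (Mv - (inner ℝ p v : ℝ)) ((inner ℝ p v : ℝ) - mv))
          ≤ Mu - (inner ℝ p u : ℝ) := le_trans (min_le_left _ _) (min_le_left _ _)
        _ ≤ w := by linarith
    · calc min (min (Mu - (inner ℝ p u : ℝ)) ((inner ℝ p u : ℝ) - mu))
            (min (Mv - (inner ℝ p v : ℝ)) ((inner ℝ p v : ℝ) - mv))
          ≤ (inner ℝ p v : ℝ) - mv := le_trans (min_le_right _ _) (min_le_right _ _)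
        _ ≤ w := by linarith
    · calc min (min (Mu - (inner ℝ p u : ℝ)) ((inner ℝ p u : ℝ) - mu))
            (min (Mv - (inner ℝ p v : ℝ)) ((inner ℝ p v : ℝ) - mv))
          ≤ Mv - (inner ℝ p v : ℝ) := le_trans (min_le_right _ _) (min_le_left _ _)
        _ ≤ w := by linarith
end
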